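/- Let 1 ≤ p < ∞, let X be a Banach space, let I = ℝ or I = [0,∞), and let f and g be locally p-integrable functions from I into X. Then the limit lim_{l→∞} D_{S_l}^p[f, g] exists in the extended interval [0, +∞] (i.e., the limit as l → ∞ of sup_{x∈I} ((1/l) ∫_x^{x+l} ‖f(t) − g(t)‖^p dt)^{1/p} exists as an extended nonnegative real number). -/

import Mathlib

open MeasureTheory Filter Set
open scoped ENNReal NNReal Topology

noncomputable section

/-- Local `p`-integrability of `f` on the set `I`. -/
def LocLpOn {X : Type*} [NormedAddCommGroup X] (p : ℝ) (I : Set ℝ) (f : ℝ → X) : Prop :=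
  AEStronglyMeasurable f (volume.restrict I) ∧
    MeasureTheory.LocallyIntegrableOn (fun t => ‖f t‖ ^ p) I volume

/-- The Stepanov `p`-norm of `f` over the set `I`, as an extended nonnegative real. -/
def SpNorm {X : Type*} [NormedAddCommGroup X] (p : ℝ) (I : Set ℝ) (f : ℝ → X) : ℝ≥0∞ :=
  ⨆ t ∈ I, ENNReal.ofReal ((∫ s in t..t + 1, ‖f s‖ ^ p) ^ (1 / p))

/-- The Stepanov distance `D_{S_l}^p[f,g]` over the set `I`, as an extended
nonnegative real. -/
def DS {X : Type*} [NormedAddCommGroup X] (p l : ℝ) (I : Set ℝ) (f g : ℝ → X) : ℝ≥0∞ :=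
  ⨆ x ∈ I, ENNReal.ofReal (((1 / l) * ∫ t in x..x + l, ‖f t - g t‖ ^ p) ^ (1 / p))

/-- `f` is equi-Weyl-`p`-almost periodic on `I`. -/
def EquiWeylAP {X : Type*} [NormedAddCommGroup X] (p : ℝ) (I : Set ℝ) (f : ℝ → X) : Prop :=
  ∀ ε : ℝ, 0 < ε → ∃ l : ℝ, 0 < l ∧ ∃ L : ℝ, 0 < L ∧
    ∀ a : ℝ, Set.Icc a (a + L) ⊆ I →
      ∃ τ ∈ Set.Icc a (a + L), DS p l I (fun t => f (t + τ)) f ≤ ENNReal.ofReal ε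

/-- `f` is Weyl-`p`-almost periodic on `I`. -/
def WeylAP {X : Type*} [NormedAddCommGroup X] (p : ℝ) (I : Set ℝ) (f : ℝ → X) : Prop :=
  ∀ ε : ℝ, 0 < ε → ∃ L : ℝ, 0 < L ∧
    ∀ a : ℝ, Set.Icc a (a + L) ⊆ I →
      ∃ τ ∈ Set.Icc a (a + L),
        Filter.limsup (fun l => DS p l I (fun t => f (t + τ)) f) Filter.atTop ≤
          ENNReal.ofReal ε

/-- `f` is Stepanov `p`-almost periodic on `I`. -/
def StepanovAP {X : Type*} [NormedAddCommGroup X] (p : ℝ) (I : Set ℝ) (f : ℝ → X) : Prop :=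
  ∀ ε : ℝ, 0 < ε → ∃ L : ℝ, 0 < L ∧
    ∀ a : ℝ, Set.Icc a (a + L) ⊆ I →
      ∃ τ ∈ Set.Icc a (a + L),
        ∀ t ∈ I, (∫ s in t..t + 1, ‖f (s + τ) - f s‖ ^ p) ^ (1 / p) ≤ ε

/-- `v` belongs to `C_0([0,∞) : Y)`: continuous on `[0,∞)` and vanishing at `+∞`. -/
def CZero {Y : Type*} [NormedAddCommGroup Y] (v : ℝ → Y) : Prop :=
  ContinuousOn v (Set.Ici (0 : ℝ)) ∧
    Filter.Tendsto (fun t => ‖v t‖) Filter.atTop (nhds 0)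

/-- `f` is Stepanov `p`-vanishing (as a function on `[0,∞)`). -/
def SpVanishing {Y : Type*} [NormedAddCommGroup Y] (p : ℝ) (f : ℝ → Y) : Prop :=
  SpNorm p (Set.Ici 0) f < ⊤ ∧
    Filter.Tendsto (fun t => ∫ s in t..t + 1, ‖f s‖ ^ p) Filter.atTop (nhds 0)

/-- `f` is equi-Weyl-`p`-vanishing (as a function on `[0,∞)`):
`lim_{l→∞} limsup_{t→∞} sup_{x≥0} ((1/l)∫_x^{x+l} ‖f(t+s)‖^p ds)^{1/p} = 0`. -/
def EquiWeylVanishing {Y : Type*} [NormedAddCommGroup Y] (p : ℝ) (f : ℝ → Y) : Prop :=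
  Filter.Tendsto (fun l : ℝ =>
      Filter.limsup (fun t : ℝ =>
          ⨆ x ∈ Set.Ici (0 : ℝ),
            ENNReal.ofReal (((1 / l) * ∫ s in x..x + l, ‖f (t + s)‖ ^ p) ^ (1 / p)))
        Filter.atTop)
    Filter.atTop (nhds 0)

/-- `f` is Weyl-`p`-vanishing (as a function on `[0,∞)`):
`lim_{t→∞} limsup_{l→∞} sup_{x≥0} ((1/l)∫_x^{x+l} ‖f(t+s)‖^p ds)^{1/p} = 0`. -/
def WeylVanishing {Y : Type*} [NormedAddCommGroup Y] (p : ℝ) (f : ℝ → Y) : Prop :=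
  Filter.Tendsto (fun t : ℝ =>
      Filter.limsup (fun l : ℝ =>
          ⨆ x ∈ Set.Ici (0 : ℝ),
            ENNReal.ofReal (((1 / l) * ∫ s in x..x + l, ‖f (t + s)‖ ^ p) ^ (1 / p)))
        Filter.atTop)
    Filter.atTop (nhds 0)


private lemma rpow_iSup_aux {ι : Sort*} (u : ι → ℝ≥0∞) {c : ℝ} (hc : 0 < c) :
    ⨆ i, (u i) ^ c = (⨆ i, u i) ^ c := by
  refine le_antisymm (iSup_le fun i => ENNReal.rpow_le_rpow (le_iSup u i) hc.le) ?_
  have h1 : (⨆ i, u i) ≤ (⨆ i, (u i) ^ c) ^ c⁻¹ := by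
    refine iSup_le fun i => ?_
    have h2 : u i = ((u i) ^ c) ^ c⁻¹ := by
      rw [← ENNReal.rpow_mul, mul_inv_cancel₀ hc.ne', ENNReal.rpow_one]
    rw [h2]
    exact ENNReal.rpow_le_rpow (le_iSup (fun j => u j ^ c) i) (inv_nonneg.2 hc.le)
  calc (⨆ i, u i) ^ c ≤ ((⨆ i, (u i) ^ c) ^ c⁻¹) ^ c := ENNReal.rpow_le_rpow h1 hc.le
    _ = ⨆ i, (u i) ^ c := by
        rw [← ENNReal.rpow_mul, inv_mul_cancel₀ hc.ne', ENNReal.rpow_one]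

private lemma add_rpow_le_aux {a b q : ℝ} (ha : 0 ≤ a) (hb : 0 ≤ b) (hq : 0 ≤ q) :
    (a + b) ^ q ≤ 2 ^ q * (a ^ q + b ^ q) := by
  have hmax : a + b ≤ 2 * max a b := by
    rcases le_total a b with h | h
    · rw [max_eq_right h]; linarith
    · rw [max_eq_left h]; linarith
  calc (a + b) ^ q ≤ (2 * max a b) ^ q :=
        Real.rpow_le_rpow (by positivity) hmax hq
    _ = 2 ^ q * (max a b) ^ q := Real.mul_rpow (by norm_num) (le_max_iff.2 (Or.inl ha))
    _ ≤ 2 ^ q * (a ^ q + b ^ q) := by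
        have : (max a b) ^ q ≤ a ^ q + b ^ q := by
          rcases le_total a b with h | h
          · rw [max_eq_right h]
            have := Real.rpow_nonneg ha q
            linarith
          · rw [max_eq_left h]
            have := Real.rpow_nonneg hb q
            linarith
        have h2 : (0:ℝ) ≤ 2 ^ q := Real.rpow_nonneg (by norm_num) q
        nlinarith

private lemma fekete_aux {μ : ℝ → ℝ} (h0 : ∀ l, 0 < l → 0 ≤ μ l)
    (hmono : ∀ l l', 0 < l → l ≤ l' → μ l ≤ μ l')
    (hsub : ∀ l₁ l₂, 0 < l₁ → 0 < l₂ → μ (l₁ + l₂) ≤ μ l₁ + μ l₂) :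
    Filter.Tendsto (fun l => μ l / l) Filter.atTop
      (nhds (sInf ((fun l => μ l / l) '' Set.Ioi 0))) := by
  set S := (fun l => μ l / l) '' Set.Ioi 0 with hS
  have hSne : S.Nonempty := ⟨μ 1 / 1, ⟨1, by norm_num, rfl⟩⟩
  have hSbd : BddBelow S := by
    refine ⟨0, fun s hs => ?_⟩
    obtain ⟨l, hl, rfl⟩ := hs
    exact div_nonneg (h0 l hl) (le_of_lt hl)
  set c := sInf S with hc
  have hlow : ∀ l, 0 < l → c ≤ μ l / l := fun l hl => csInf_le hSbd ⟨l, hl, rfl⟩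
  rw [tendsto_order]
  constructor
  · intro b hb
    filter_upwards [eventually_gt_atTop (0:ℝ)] with l hl
    exact lt_of_lt_of_le hb (hlow l hl)
  · intro b hb
    obtain ⟨s, hsS, hs⟩ := exists_lt_of_csInf_lt hSne (show c < (c + b) / 2 by linarith)
    obtain ⟨l₀, hl₀, rfl⟩ := hsS
    have hl₀' : (0:ℝ) < l₀ := hl₀
    -- key bound : for l ≥ l₀, μ l ≤ (l/l₀ + 1) * μ l₀
    have hn : ∀ n : ℕ, μ ((n + 1) * l₀) ≤ (n + 1) * μ l₀ := by
      intro n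
      induction n with
      | zero => simp
      | succ k ih =>
          have he : ((k + 1 : ℕ) + 1 : ℝ) * l₀ = ((k : ℝ) + 1) * l₀ + l₀ := by push_cast; ring
          rw [he]
          refine (hsub _ _ (by positivity) hl₀').trans ?_
          push_cast
          push_cast at ih
          linarith
    have key : ∀ l, l₀ ≤ l → μ l ≤ (l / l₀ + 1) * μ l₀ := by
      intro l hl
      set k := ⌊l / l₀⌋₊ with hk
      have hkf : l / l₀ < (k : ℝ) + 1 := Nat.lt_floor_add_one _
      have hk1 : l ≤ ((k : ℝ) + 1) * l₀ := by
        have := (div_lt_iff₀ hl₀').1 hkf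
        linarith
    -- μ l ≤ μ ((k+1) l₀) ≤ (k+1) μ l₀
      have hμl : μ l ≤ ((k : ℝ) + 1) * μ l₀ := by
        refine (hmono l (((k : ℝ) + 1) * l₀) (lt_of_lt_of_le hl₀' hl) hk1).trans ?_
        exact_mod_cast hn k
      have hk2 : (k : ℝ) ≤ l / l₀ := Nat.floor_le (div_nonneg (hl₀'.le.trans hl) hl₀'.le)
      refine hμl.trans ?_
      have := h0 l₀ hl₀'
      nlinarith
    have hlim : Filter.Tendsto (fun l : ℝ => μ l₀ / l₀ + μ l₀ / l) Filter.atTop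
        (nhds (μ l₀ / l₀ + 0)) :=
      tendsto_const_nhds.add (tendsto_const_nhds.div_atTop tendsto_id)
    have hlt : μ l₀ / l₀ + 0 < b := by linarith
    filter_upwards [eventually_ge_atTop (max l₀ 1), hlim.eventually_lt_const hlt]
      with l hl hl2
    have hlpos : (0:ℝ) < l := lt_of_lt_of_le one_pos ((le_max_right _ _).trans hl)
    have hll₀ : l₀ ≤ l := (le_max_left _ _).trans hl
    have h1 : μ l / l ≤ μ l₀ / l₀ + μ l₀ / l := by
      have h2 : μ l ≤ (l / l₀ + 1) * μ l₀ := key l hll₀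
      have h3 : μ l / l ≤ ((l / l₀ + 1) * μ l₀) / l :=
        by gcongr
      refine h3.trans (le_of_eq ?_)
      field_simp
    exact lt_of_le_of_lt h1 hl2

/-- The limit `lim_{l→∞} D_{S_l}^p[f,g]` (the Weyl distance) exists in `[0,∞]`. -/
theorem weyl_distance_exists {X : Type*} [NormedAddCommGroup X]
    (p : ℝ) (hp : 1 ≤ p) (I : Set ℝ) (hI : I = Set.univ ∨ I = Set.Ici 0)
    (f g : ℝ → X) (hf : LocLpOn p I f) (hg : LocLpOn p I g) :
    ∃ A : ℝ≥0∞, Filter.Tendsto (fun l => DS p l I f g) Filter.atTop (nhds A) := by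
  have hp0 : 0 < p := lt_of_lt_of_le zero_lt_one hp
  have h1p : 0 < 1 / p := by positivity
  -- structural facts about I
  have hshift : ∀ x ∈ I, ∀ t : ℝ, 0 ≤ t → x + t ∈ I := by
    rcases hI with rfl | rfl
    · intro x _ t _; trivial
    · intro x hx t ht
      have : (0:ℝ) ≤ x := hx
      exact add_nonneg this ht
  have hsubI : ∀ x ∈ I, ∀ b : ℝ, Set.Icc x b ⊆ I := by
    rcases hI with rfl | rfl
    · intro x _ b y _; trivial
    · intro x hx b y hy
      exact le_trans hx hy.1
  set h : ℝ → ℝ := fun t => ‖f t - g t‖ ^ p with hh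
  have hh0 : ∀ t, 0 ≤ h t := fun t => Real.rpow_nonneg (norm_nonneg _) p
  -- interval integrability of h on intervals within I
  have hIInt : ∀ a b : ℝ, a ∈ I → a ≤ b → IntervalIntegrable h volume a b := by
    intro a b ha hab
    have hKI : Set.Icc a b ⊆ I := hsubI a ha b
    have hres : volume.restrict (Set.Icc a b) ≤ volume.restrict I :=
      Measure.restrict_mono hKI le_rfl
    have hfm : AEStronglyMeasurable f (volume.restrict (Set.Icc a b)) :=
      hf.1.mono_measure hres
    have hgm : AEStronglyMeasurable g (volume.restrict (Set.Icc a b)) :=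
      hg.1.mono_measure hres
    have hFi : IntegrableOn (fun t => ‖f t‖ ^ p) (Set.Icc a b) volume :=
      hf.2.integrableOn_compact_subset hKI isCompact_Icc
    have hGi : IntegrableOn (fun t => ‖g t‖ ^ p) (Set.Icc a b) volume :=
      hg.2.integrableOn_compact_subset hKI isCompact_Icc
    have hhm : AEStronglyMeasurable h (volume.restrict (Set.Icc a b)) := by
      have hn : AEStronglyMeasurable (fun t => ‖f t - g t‖)
          (volume.restrict (Set.Icc a b)) := (hfm.sub hgm).norm
      exact (Real.continuous_rpow_const hp0.le).comp_aestronglyMeasurable hn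
    have hbound : ∀ t, ‖h t‖ ≤ 2 ^ p * (‖f t‖ ^ p + ‖g t‖ ^ p) := by
      intro t
      rw [Real.norm_of_nonneg (hh0 t)]
      calc ‖f t - g t‖ ^ p ≤ (‖f t‖ + ‖g t‖) ^ p :=
            Real.rpow_le_rpow (norm_nonneg _) (norm_sub_le _ _) hp0.le
        _ ≤ 2 ^ p * (‖f t‖ ^ p + ‖g t‖ ^ p) :=
            add_rpow_le_aux (norm_nonneg _) (norm_nonneg _) hp0.le
    have hint : IntegrableOn h (Set.Icc a b) volume :=
      Integrable.mono' ((hFi.add hGi).const_mul (2 ^ p)) hhm (ae_of_all _ hbound)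
    exact IntegrableOn.intervalIntegrable (by rwa [Set.uIcc_of_le hab])
  set M : ℝ → ℝ≥0∞ := fun l => ⨆ x ∈ I, ENNReal.ofReal (∫ t in x..x + l, h t) with hM
  -- rewrite DS in terms of M
  have hDS : ∀ l : ℝ, 0 < l →
      DS p l I f g = (ENNReal.ofReal (1 / l) * M l) ^ (1 / p) := by
    intro l hl
    have step1 : DS p l I f g
        = ⨆ x ∈ I, (ENNReal.ofReal (1 / l) * ENNReal.ofReal (∫ t in x..x + l, h t)) ^ (1 / p) := by
      unfold DS
      refine iSup_congr fun x => iSup_congr fun hx => ?_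
      have hi0 : 0 ≤ ∫ t in x..x + l, h t :=
        intervalIntegral.integral_nonneg (by linarith) (fun u _ => hh0 u)
      rw [← ENNReal.ofReal_mul (by positivity),
        ENNReal.ofReal_rpow_of_nonneg (by positivity) h1p.le]
    rw [step1]
    simp_rw [rpow_iSup_aux _ h1p, ← ENNReal.mul_iSup]
    rfl
  have hMmono : ∀ l l' : ℝ, 0 < l → l ≤ l' → M l ≤ M l' := by
    intro l l' hl hll'
    refine iSup₂_le fun x hx => ?_
    have i1 : IntervalIntegrable h volume x (x + l) := hIInt x (x + l) hx (by linarith)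
    have i2 : IntervalIntegrable h volume (x + l) (x + l') :=
      hIInt (x + l) (x + l') (hshift x hx l hl.le) (by linarith)
    have hadd := intervalIntegral.integral_add_adjacent_intervals i1 i2
    have h2 : 0 ≤ ∫ t in (x + l)..(x + l'), h t :=
      intervalIntegral.integral_nonneg (by linarith) (fun u _ => hh0 u)
    have hle : (∫ t in x..x + l, h t) ≤ ∫ t in x..x + l', h t := by
      rw [← hadd]; linarith
    exact le_trans (ENNReal.ofReal_le_ofReal hle)
      (le_iSup₂ (f := fun y (_ : y ∈ I) => ENNReal.ofReal (∫ t in y..y + l', h t)) x hx)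
  have hMsub : ∀ l₁ l₂ : ℝ, 0 < l₁ → 0 < l₂ → M (l₁ + l₂) ≤ M l₁ + M l₂ := by
    intro l₁ l₂ h1 h2
    refine iSup₂_le fun x hx => ?_
    have hx1 : x + l₁ ∈ I := hshift x hx l₁ h1.le
    have i1 : IntervalIntegrable h volume x (x + l₁) := hIInt x (x + l₁) hx (by linarith)
    have i2 : IntervalIntegrable h volume (x + l₁) (x + (l₁ + l₂)) :=
      hIInt (x + l₁) (x + (l₁ + l₂)) hx1 (by linarith)
    have hadd := intervalIntegral.integral_add_adjacent_intervals i1 i2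
    have hn1 : 0 ≤ ∫ t in x..x + l₁, h t :=
      intervalIntegral.integral_nonneg (by linarith) (fun u _ => hh0 u)
    have hn2 : 0 ≤ ∫ t in (x + l₁)..(x + (l₁ + l₂)), h t :=
      intervalIntegral.integral_nonneg (by linarith) (fun u _ => hh0 u)
    calc ENNReal.ofReal (∫ t in x..x + (l₁ + l₂), h t)
        = ENNReal.ofReal (∫ t in x..x + l₁, h t)
          + ENNReal.ofReal (∫ t in (x + l₁)..(x + (l₁ + l₂)), h t) := by
          rw [← ENNReal.ofReal_add hn1 hn2, hadd]
      _ ≤ M l₁ + M l₂ := by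
          refine add_le_add (le_iSup₂ (f := fun y (_ : y ∈ I) => ENNReal.ofReal (∫ t in y..y + l₁, h t)) x hx) ?_
          have he : x + (l₁ + l₂) = (x + l₁) + l₂ := by ring
          rw [he]
          exact le_iSup₂ (f := fun y (_ : y ∈ I) => ENNReal.ofReal (∫ t in y..y + l₂, h t)) (x + l₁) hx1
  by_cases hfin : ∀ l : ℝ, 0 < l → M l ≠ ⊤
  · -- finite case : Fekete
    set μ : ℝ → ℝ := fun l => (M l).toReal with hμ
    have hμ0 : ∀ l, 0 < l → 0 ≤ μ l := fun _ _ => ENNReal.toReal_nonneg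
    have hμmono : ∀ l l', 0 < l → l ≤ l' → μ l ≤ μ l' := by
      intro l l' hl hll'
      exact (ENNReal.toReal_le_toReal (hfin l hl) (hfin l' (hl.trans_le hll'))).2
        (hMmono l l' hl hll')
    have hμsub : ∀ l₁ l₂, 0 < l₁ → 0 < l₂ → μ (l₁ + l₂) ≤ μ l₁ + μ l₂ := by
      intro l₁ l₂ h1 h2
      have hne : M l₁ + M l₂ ≠ ⊤ := ENNReal.add_ne_top.2 ⟨hfin l₁ h1, hfin l₂ h2⟩
      have := (ENNReal.toReal_le_toReal (hfin _ (by positivity)) hne).2 (hMsub l₁ l₂ h1 h2)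
      rwa [ENNReal.toReal_add (hfin l₁ h1) (hfin l₂ h2)] at this
    have ht := fekete_aux hμ0 hμmono hμsub
    set c := sInf ((fun l => μ l / l) '' Set.Ioi 0) with hcdef
    refine ⟨ENNReal.ofReal c ^ (1 / p), ?_⟩
    have h2 : Filter.Tendsto (fun l => (ENNReal.ofReal (μ l / l)) ^ (1 / p)) Filter.atTop
        (nhds (ENNReal.ofReal c ^ (1 / p))) :=
      (ENNReal.continuous_rpow_const.tendsto _).comp
        ((ENNReal.continuous_ofReal.tendsto _).comp ht)
    refine Filter.Tendsto.congr' ?_ h2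
    filter_upwards [eventually_gt_atTop (0:ℝ)] with l hl
    rw [hDS l hl]
    congr 1
    rw [← ENNReal.ofReal_toReal (hfin l hl), ← ENNReal.ofReal_mul (by positivity)]
    congr 1
    rw [one_div, inv_mul_eq_div]
  · -- infinite case
    push_neg at hfin
    obtain ⟨l₀, hl₀, htop⟩ := hfin
    refine ⟨⊤, ?_⟩
    have hev : (fun l => DS p l I f g) =ᶠ[Filter.atTop] fun _ => (⊤ : ℝ≥0∞) := by
      filter_upwards [eventually_ge_atTop (max l₀ 1)] with l hl
      have hl0 : (0:ℝ) < l := lt_of_lt_of_le one_pos ((le_max_right _ _).trans hl)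
      have hMl : M l = ⊤ :=
        top_le_iff.1 (htop ▸ hMmono l₀ l hl₀ ((le_max_left _ _).trans hl))
      have hne : ENNReal.ofReal (1 / l) ≠ 0 :=
        (ENNReal.ofReal_pos.2 (by positivity)).ne'
      rw [hDS l hl0, hMl, ENNReal.mul_top hne, ENNReal.top_rpow_of_pos h1p]
    rw [Filter.tendsto_congr' hev]
    exact tendsto_const_nhds
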